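/- Let C be a model category: a category with finite colimits equipped with classes of weak equivalences (satisfying the two-out-of-three property), cofibrations, and fibrations, such that every morphism factors as a cofibration followed by a morphism that is both a fibration and a weak equivalence. Assume left properness in the following form: for every pushout square in which one leg is a cofibration with cofibrant domain and the other leg is a weak equivalence between cofibrant objects, the pushout of the weak equivalence along the cofibration is again a weak equivalence. Let A, B, R, Q, Q' be objects with A and B cofibrant, and let η : A ⟶ R, h : A ⟶ B, g : R ⟶ Q, g' : R ⟶ Q', f : B ⟶ Q, f' : B ⟶ Q' be morphisms such that h, g, and g' are weak equivalences, g ∘ η = f ∘ h, and g' ∘ η = f' ∘ h. Then there exist an object R̃ and morphisms h₂ : B ⟶ R̃, h₄ : R̃ ⟶ Q, h₃ : R̃ ⟶ Q' such that h₄ and h₃ are weak equivalences, h₄ ∘ h₂ = f, and h₃ ∘ h₂ = f'. -/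
import Mathlib


open CategoryTheory CategoryTheory.Limits

/-- Lemma 2.7 (sym_lem2), stated in an arbitrary model category satisfying the
stated left-properness hypothesis.  `W`, `Cof`, `Fib` are the weak
equivalences (satisfying two-out-of-three), cofibrations and fibrations; every
morphism factors as a cofibration followed by a trivial fibration; the pushout
of a weak equivalence between cofibrant objects along a cofibration with
cofibrant domain is a weak equivalence.  An object `X` is cofibrant when the
unique map from the initial object to `X` is a cofibration.  Given
`η : A ⟶ R`, `h : A ⟶ B`, `g : R ⟶ Q`, `g' : R ⟶ Q'`, `f : B ⟶ Q`,
`f' : B ⟶ Q'` with `A`, `B` cofibrant, `h`, `g`, `g'` weak equivalences and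
both squares commuting, there are `R̃`, `h₂ : B ⟶ R̃` and weak equivalences
`h₄ : R̃ ⟶ Q`, `h₃ : R̃ ⟶ Q'` with `h₄ ∘ h₂ = f` and `h₃ ∘ h₂ = f'`. -/
theorem sym_lem2 {C : Type*} [Category C] [HasFiniteColimits C]
    (W Cof Fib : MorphismProperty C)
    -- two-out-of-three for weak equivalences
    (hW_comp : ∀ {X Y Z : C} (u : X ⟶ Y) (v : Y ⟶ Z), W u → W v → W (u ≫ v))
    (hW_cancel_left : ∀ {X Y Z : C} (u : X ⟶ Y) (v : Y ⟶ Z), W v → W (u ≫ v) → W u)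
    (hW_cancel_right : ∀ {X Y Z : C} (u : X ⟶ Y) (v : Y ⟶ Z), W u → W (u ≫ v) → W v)
    -- factorization: cofibration followed by a trivial fibration
    (hfact : ∀ {X Y : C} (u : X ⟶ Y), ∃ (Z : C) (i : X ⟶ Z) (p : Z ⟶ Y),
      Cof i ∧ Fib p ∧ W p ∧ i ≫ p = u)
    -- left properness: the pushout of a weak equivalence between cofibrant
    -- objects along a cofibration with cofibrant domain is a weak equivalence
    (hproper : ∀ {X Y Z P : C} (i : X ⟶ Y) (w : X ⟶ Z) (w' : Y ⟶ P) (j : Z ⟶ P),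
      Cof i → W w → Cof (initial.to X) → Cof (initial.to Z) →
      IsPushout i w w' j → W w')
    {A B R Q Q' : C}
    (hA : Cof (initial.to A)) (hB : Cof (initial.to B))
    (η : A ⟶ R) (h : A ⟶ B) (g : R ⟶ Q) (g' : R ⟶ Q')
    (f : B ⟶ Q) (f' : B ⟶ Q')
    (hh : W h) (hg : W g) (hg' : W g')
    (hsq : η ≫ g = h ≫ f) (hsq' : η ≫ g' = h ≫ f') :
    ∃ (Rt : C) (h₂ : B ⟶ Rt) (h₄ : Rt ⟶ Q) (h₃ : Rt ⟶ Q'),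
      W h₄ ∧ W h₃ ∧ h₂ ≫ h₄ = f ∧ h₂ ≫ h₃ = f' := by
  obtain ⟨R₁, η₁, η₂, hcof, _, hWη₂, hfac⟩ := hfact η
  let P := pushout η₁ h
  have hpo : IsPushout η₁ h (pushout.inl η₁ h) (pushout.inr η₁ h) :=
    IsPushout.of_hasPushout η₁ h
  have hW1 : W (pushout.inl η₁ h) := hproper η₁ h _ _ hcof hh hA hB hpo
  have hcomm : η₁ ≫ (η₂ ≫ g) = h ≫ f := by rw [← Category.assoc, hfac, hsq]
  have hcomm' : η₁ ≫ (η₂ ≫ g') = h ≫ f' := by rw [← Category.assoc, hfac, hsq']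
  refine ⟨P, pushout.inr η₁ h, pushout.desc (η₂ ≫ g) f hcomm,
    pushout.desc (η₂ ≫ g') f' hcomm', ?_, ?_, pushout.inr_desc _ _ _,
    pushout.inr_desc _ _ _⟩
  · apply hW_cancel_right (pushout.inl η₁ h) _ hW1
    rw [pushout.inl_desc]
    exact hW_comp _ _ hWη₂ hg
  · apply hW_cancel_right (pushout.inl η₁ h) _ hW1
    rw [pushout.inl_desc]
    exact hW_comp _ _ hWη₂ hg'
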